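/- Let X₁, X₂, …, X_d be independent Gaussian random variables, each with distribution N(0, σ²) where σ > 0, and let d ≥ 2 be an integer. Set C = √(2 − 2·ln ln d / ln d). Then Pr[max_{1 ≤ i ≤ d} X_i ≥ C·σ·√(ln d)] ≥ 1 − exp(−√(ln d)/6.35). -/

import Mathlib

open MeasureTheory ProbabilityTheory Real

set_option maxHeartbeats 1000000


noncomputable def Kfun (x : ℝ) : ℝ := (Real.sqrt (x^2+4) - x)/2 * Real.exp (-x^2/2)

lemma sqrt_le_of_sq {a b : ℝ} (hb : 0 ≤ b) (h : a ≤ b^2) : Real.sqrt a ≤ b := by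
  calc Real.sqrt a ≤ Real.sqrt (b^2) := Real.sqrt_le_sqrt h
    _ = b := Real.sqrt_sq hb

lemma le_sqrt_of_sq {a b : ℝ} (ha : 0 ≤ a) (h : a^2 ≤ b) : a ≤ Real.sqrt b := by
  calc a = Real.sqrt (a^2) := (Real.sqrt_sq ha).symm
    _ ≤ Real.sqrt b := Real.sqrt_le_sqrt h

lemma exp4_lb : (54.598:ℝ) ≤ Real.exp 4 := by
  have h0 : (2.7182818283:ℝ) < Real.exp 1 := Real.exp_one_gt_d9
  have he4 : Real.exp 4 = (Real.exp 1)^4 := by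
    rw [← Real.exp_nat_mul]; norm_num
  have h2 : (7.389056:ℝ) ≤ (Real.exp 1)^2 := by nlinarith
  have h4 : (54.598:ℝ) ≤ ((Real.exp 1)^2)^2 := by nlinarith
  rw [he4]
  nlinarith

lemma case2_num (spi s L E s4 z : ℝ) (h2pi : spi ≤ 2.5067) (hspi0 : 0 ≤ spi)
    (hs0 : 0 < s) (hsub : s ≤ 0.832555) (hLlb : 0.6931471803 < L) (hLub : L < 0.6931471808)
    (hE0 : 0 < E) (hEub : E ≤ 0.010031) (hsz : s4 + z ≤ 4.01156) (hsz0 : 0 ≤ s4 + z) :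
    (spi * (s/6.35) + 1/3*(L*E)) * (s4+z) ≤ 2*L := by
  have hA : spi * (s/6.35) ≤ 0.328658 := by
    have h1 : s/6.35 ≤ 0.832555/6.35 := by gcongr
    calc spi * (s/6.35) ≤ 2.5067*(0.832555/6.35) :=
          mul_le_mul h2pi h1 (by positivity) (by norm_num)
      _ ≤ 0.328658 := by norm_num
  have hB : 1/3*(L*E) ≤ 0.002318 := by
    have h1 : L*E ≤ 0.6931471808*0.010031 :=
      mul_le_mul hLub.le hEub hE0.le (by norm_num)
    nlinarith
  calc (spi * (s/6.35) + 1/3*(L*E)) * (s4+z) ≤ 0.330976 * 4.01156 :=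
        mul_le_mul (by linarith) hsz hsz0 (by norm_num)
    _ ≤ 2*L := by nlinarith

lemma case3_num (s E : ℝ) (hs1 : 1 ≤ s) (hE0 : 0 < E) (hsE : s*E ≤ 0.0184) :
    (2.5067*(s/6.35) + 1/3*(s^2*E)) * (2.828428*s^2 + 1.414214) ≤ s*(2*s^2) := by
  have hs0 : (0:ℝ) < s := by linarith
  have f1 : s^2*E ≤ 0.0184*s := by nlinarith
  have f2 : s^4*E ≤ 0.0184*s^3 := by nlinarith [mul_le_mul_of_nonneg_right f1 (sq_nonneg s)]
  have f3 : s ≤ s^3 := by nlinarith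
  have h : (2.5067*(s/6.35) + 1/3*(s^2*E)) * (2.828428*s^2 + 1.414214)
      = (2.5067*2.828428/6.35)*s^3 + (2.5067*1.414214/6.35)*s
        + (2.828428/3)*(s^4*E) + (1.414214/3)*(s^2*E) := by ring
  rw [h]
  nlinarith [f1, f2, f3]

lemma sqrt2_lb {z : ℝ} (h0 : 0 ≤ z) (h2 : 2 ≤ z^2) : 1.41421 ≤ z := by nlinarith

lemma fac_sq {z : ℝ} (hz : 1 ≤ z) : (z+2)^2+4 ≤ ((z+2)+2/3)^2 := by nlinarith

lemma core (d : ℕ) (hd : 2 ≤ d) (L z : ℝ) (hL : L = Real.log d)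
    (hz : z = Real.sqrt (2 - 2 * Real.log L / L) * Real.sqrt L) :
    Real.sqrt (2*π) * (Real.sqrt L / 6.35) ≤ d * Kfun z - d * Kfun (z+2) := by
  have hd2 : (2:ℝ) ≤ (d:ℝ) := by exact_mod_cast hd
  have hdpos : (0:ℝ) < d := by linarith
  have hL2 : Real.log 2 ≤ L := by rw [hL]; exact Real.log_le_log two_pos hd2
  have hlog2 : (0.6931471803:ℝ) < Real.log 2 := Real.log_two_gt_d9
  have hLpos : 0 < L := by linarith
  have hlogle : Real.log L ≤ L - 1 := Real.log_le_sub_one_of_pos hLpos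
  have hinner : 0 ≤ 2 - 2 * Real.log L / L := by
    rw [sub_nonneg, div_le_iff₀ hLpos]
    linarith
  have hz0 : 0 ≤ z := by rw [hz]; positivity
  have hz2 : z^2 = 2*L - 2*Real.log L := by
    rw [hz, mul_pow, Real.sq_sqrt hinner, Real.sq_sqrt hLpos.le]
    field_simp
  have hz2ge : 2 ≤ z^2 := by rw [hz2]; linarith
  have hzge : 1.41421 ≤ z := sqrt2_lb hz0 hz2ge
  have hexpz : Real.exp (-z^2/2) = L / d := by
    rw [hz2]
    have h1 : -(2*L - 2*Real.log L)/2 = Real.log L - L := by ring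
    rw [h1, Real.exp_sub, Real.exp_log hLpos, hL, Real.exp_log hdpos]
  set s4 := Real.sqrt (z^2+4) with hs4
  have hs4sq : s4^2 = z^2+4 := Real.sq_sqrt (by positivity)
  have hs40 : 0 < s4 := Real.sqrt_pos.mpr (by positivity)
  have hKz : d * Kfun z = (s4 - z)/2 * L := by
    rw [Kfun, hexpz]; field_simp; ring
  set E := Real.exp (-(2*z+2)) with hE
  have hE0 : 0 < E := Real.exp_pos _
  have hexpz2 : Real.exp (-(z+2)^2/2) = L / d * E := by
    rw [hE, ← hexpz, ← Real.exp_add]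
    congr 1
    ring
  have hb3 : (3:ℝ) ≤ z + 2 := by linarith
  have hfac : (Real.sqrt ((z+2)^2+4) - (z+2))/2 ≤ 1/3 := by
    have h1 : Real.sqrt ((z+2)^2+4) ≤ (z+2) + 2/3 :=
      sqrt_le_of_sq (by linarith) (fac_sq (by linarith))
    linarith
  have hfac0 : 0 ≤ (Real.sqrt ((z+2)^2+4) - (z+2))/2 := by
    have : (z+2) ≤ Real.sqrt ((z+2)^2+4) := le_sqrt_of_sq (by linarith) (by linarith [sq_nonneg (z+2)])
    linarith
  have hKz2 : d * Kfun (z+2) ≤ 1/3 * (L * E) := by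
    rw [Kfun, hexpz2]
    calc (d:ℝ) * ((Real.sqrt ((z+2)^2+4) - (z+2))/2 * (L / d * E))
        = (Real.sqrt ((z+2)^2+4) - (z+2))/2 * (L * E) := by field_simp
      _ ≤ 1/3 * (L * E) := by
          apply mul_le_mul_of_nonneg_right hfac
          positivity
  have hid : (s4 - z)/2 = 2/(s4 + z) := by
    rw [div_eq_div_iff (by norm_num) (by positivity)]
    linear_combination hs4sq
  have h2pi : Real.sqrt (2*π) ≤ 2.5067 := by
    apply sqrt_le_of_sq (by norm_num)
    have h := Real.pi_lt_d6
    norm_num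
    linarith
  have hsqpi0 : 0 ≤ Real.sqrt (2*π) := Real.sqrt_nonneg _
  set s := Real.sqrt L with hs
  have hssq : s^2 = L := Real.sq_sqrt hLpos.le
  have hs0 : 0 < s := Real.sqrt_pos.mpr hLpos
  have hmain : Real.sqrt (2*π) * (s/6.35) + 1/3*(L*E) ≤ (s4 - z)/2 * L := by
    rw [hid]
    have h2L : 2/(s4+z)*L = 2*L/(s4+z) := by ring
    rw [h2L, le_div_iff₀ (by positivity)]
    rcases eq_or_lt_of_le hd with hdeq | hd3
    · -- d = 2
      have hLeq : L = Real.log 2 := by rw [hL, ← hdeq]; norm_num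
      have hLub : L < 0.6931471808 := by rw [hLeq]; exact Real.log_two_lt_d9
      have hLlb : 0.6931471803 < L := by rw [hLeq]; exact hlog2
      have hloglb : 1 - L⁻¹ ≤ Real.log L := by
        have h1 : Real.log L⁻¹ ≤ L⁻¹ - 1 := Real.log_le_sub_one_of_pos (by positivity)
        rw [Real.log_inv] at h1
        linarith
      have hinvub : L⁻¹ ≤ 1.442695042 := by
        have h1 : (1.442695042:ℝ)⁻¹ ≤ L := by norm_num; linarith
        calc L⁻¹ ≤ ((1.442695042:ℝ)⁻¹)⁻¹ := by
              apply inv_anti₀ (by norm_num) h1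
          _ = 1.442695042 := by norm_num
      have hlogLlb : -0.442695042 ≤ Real.log L := by linarith
      have hlogLub : Real.log L ≤ -0.3068528192 := by linarith
      have hz2ub : z^2 ≤ 2.2716845 := by rw [hz2]; linarith
      have hzub : z ≤ 1.50722 := by
        apply le_of_pow_le_pow_left₀ two_ne_zero (by norm_num : (0:ℝ) ≤ 1.50722)
        norm_num; linarith
      have hs4ub : s4 ≤ 2.50434 := by
        apply sqrt_le_of_sq (by norm_num)
        norm_num; linarith
      have hsub : s ≤ 0.832555 := by
        apply sqrt_le_of_sq (by norm_num)
        norm_num; linarith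
      have hEub : E ≤ 0.010031 := by
        have h1 : E ≤ Real.exp (-4.82842) := by
          rw [hE]; apply Real.exp_le_exp.mpr; linarith
        have h2 : (99.7:ℝ) ≤ Real.exp 4.82842 := by
          have hee : (1.82842:ℝ) ≤ Real.exp 0.82842 := by
            have := Real.add_one_le_exp (0.82842:ℝ)
            linarith
          have hsplit : Real.exp 4.82842 = Real.exp 4 * Real.exp 0.82842 := by
            rw [← Real.exp_add]; norm_num
          rw [hsplit]
          calc (99.7:ℝ) ≤ 54.598*1.82842 := by norm_num
            _ ≤ Real.exp 4 * Real.exp 0.82842 :=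
              mul_le_mul exp4_lb hee (by norm_num) (Real.exp_pos 4).le
        have h3 : Real.exp (-4.82842) ≤ 0.010031 := by
          rw [Real.exp_neg]
          calc (Real.exp 4.82842)⁻¹ ≤ (99.7:ℝ)⁻¹ := by
                apply inv_anti₀ (by norm_num) h2
            _ ≤ 0.010031 := by norm_num
        linarith
      have hsz : s4 + z ≤ 4.01156 := by linarith
      exact case2_num _ _ _ _ _ _ h2pi hsqpi0 hs0 hsub hLlb hLub hE0 hEub hsz (by positivity)
    · -- d ≥ 3
      have hd3' : (3:ℕ) ≤ d := hd3
      have hL1 : 1 ≤ L := by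
        rw [hL]
        have h3 : (3:ℝ) ≤ (d:ℝ) := by exact_mod_cast hd3'
        have h1 : (1:ℝ) ≤ Real.log 3 := by
          rw [Real.le_log_iff_exp_le (by norm_num)]
          have := Real.exp_one_lt_d9
          linarith
        calc (1:ℝ) ≤ Real.log 3 := h1
          _ ≤ Real.log d := Real.log_le_log (by norm_num) h3
      have hs1 : 1 ≤ s := le_sqrt_of_sq (by norm_num) (by rw [one_pow]; exact hL1)
      have hlogL0 : 0 ≤ Real.log L := Real.log_nonneg hL1
      have hz2ub : z^2 ≤ 2*L := by rw [hz2]; linarith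
      have hzs : s ≤ z := by
        have hlogs : Real.log s ≤ s - 1 := Real.log_le_sub_one_of_pos hs0
        have hlogLs : Real.log L = 2 * Real.log s := by
          rw [← hssq, sq, Real.log_mul hs0.ne' hs0.ne']; ring
        have h1 : s^2 ≤ z^2 := by
          rw [hz2, hssq]
          nlinarith [sq_nonneg (s-2), Real.log_le_sub_one_of_pos hs0, hlogLs]
        exact le_of_pow_le_pow_left₀ two_ne_zero hz0 h1
      have hzub : z ≤ 1.414214 * s := by
        apply le_of_pow_le_pow_left₀ two_ne_zero (by positivity)
        calc z^2 ≤ 2*L := hz2ub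
          _ = 2*s^2 := by rw [hssq]
          _ ≤ (1.414214*s)^2 := by linarith [sq_nonneg s, sq_abs s]
      have hss4 : s * s4 ≤ 1.414214 * (s^2 + 1) := by
        apply le_of_pow_le_pow_left₀ two_ne_zero (by positivity)
        have h1 : (s*s4)^2 = s^2*(z^2+4) := by rw [mul_pow, hs4sq]
        rw [h1]
        have h9 : s^2*(z^2+4) ≤ s^2*(2*s^2+4) :=
          mul_le_mul_of_nonneg_left (by linarith [hssq]) (sq_nonneg s)
        have h10 : (1.414214*(s^2+1))^2 = 2.000001237796*(s^2*s^2) + 4.000002475592*s^2 + 2.000001237796 := by ring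
        have h11 : s^2*(2*s^2+4) = 2*(s^2*s^2) + 4*s^2 := by ring
        rw [h10]
        rw [h11] at h9
        linarith [sq_nonneg s, sq_nonneg (s*s), mul_self_nonneg (s^2)]
      have hsE : s * E ≤ 0.0184 := by
        have h1 : E ≤ Real.exp (-(2*s+2)) := by
          rw [hE]; apply Real.exp_le_exp.mpr; linarith
        have h2 : s * Real.exp (-(2*s+2)) ≤ Real.exp (-4) := by
          have h3 : s ≤ Real.exp (2*s - 2) := by
            have := Real.add_one_le_exp (2*s - 2)
            linarith
          have h5 : Real.exp (2*s-2) * Real.exp (-(2*s+2)) = Real.exp (-4) := by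
            rw [← Real.exp_add]; ring_nf
          calc s * Real.exp (-(2*s+2)) ≤ Real.exp (2*s-2) * Real.exp (-(2*s+2)) :=
                mul_le_mul_of_nonneg_right h3 (Real.exp_pos _).le
            _ = Real.exp (-4) := h5
        have h6 : Real.exp (-4:ℝ) ≤ 0.0184 := by
          rw [Real.exp_neg]
          calc (Real.exp 4)⁻¹ ≤ (54.598:ℝ)⁻¹ := by
                apply inv_anti₀ (by norm_num) exp4_lb
            _ ≤ 0.0184 := by norm_num
        calc s * E ≤ s * Real.exp (-(2*s+2)) :=
              mul_le_mul_of_nonneg_left h1 hs0.le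
          _ ≤ Real.exp (-4) := h2
          _ ≤ 0.0184 := h6
      have hLs : L = s^2 := hssq.symm
      rw [hLs]
      rw [← mul_le_mul_iff_of_pos_left hs0]
      have hlhs : s * ((Real.sqrt (2*π) * (s/6.35) + 1/3*(s^2*E)) * (s4+z))
          = (Real.sqrt (2*π) * (s/6.35) + 1/3*(s^2*E)) * (s*s4 + s*z) := by ring
      rw [hlhs]
      have hsz2 : s*z ≤ 1.414214*s^2 := by
        calc s*z ≤ s*(1.414214*s) := mul_le_mul_of_nonneg_left hzub hs0.le
          _ = 1.414214*s^2 := by ring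
      have hbound : s*s4 + s*z ≤ 2.828428*s^2 + 1.414214 := by linarith
      have hpos : 0 ≤ Real.sqrt (2*π) * (s/6.35) + 1/3*(s^2*E) := by positivity
      calc (Real.sqrt (2*π) * (s/6.35) + 1/3*(s^2*E)) * (s*s4 + s*z)
          ≤ (Real.sqrt (2*π) * (s/6.35) + 1/3*(s^2*E)) * (2.828428*s^2 + 1.414214) :=
            mul_le_mul_of_nonneg_left hbound hpos
        _ ≤ (2.5067*(s/6.35) + 1/3*(s^2*E)) * (2.828428*s^2 + 1.414214) := by
            apply mul_le_mul_of_nonneg_right _ (by positivity)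
            have h7 : Real.sqrt (2*π) * (s/6.35) ≤ 2.5067 * (s/6.35) :=
              mul_le_mul_of_nonneg_right h2pi (by positivity)
            linarith
        _ ≤ s * (2*s^2) := case3_num s E hs1 hE0 hsE
  linarith [hKz2, hmain, hKz.le, hKz.ge]
lemma Kfun_hasDeriv (x : ℝ) :
    HasDerivAt Kfun ((x / Real.sqrt (x^2+4) - 1)/2 * Real.exp (-x^2/2)
      + (Real.sqrt (x^2+4) - x)/2 * (-x * Real.exp (-x^2/2))) x := by
  have hpos : (0:ℝ) < x^2 + 4 := by positivity
  have hs : HasDerivAt (fun x : ℝ => Real.sqrt (x^2+4)) (x / Real.sqrt (x^2+4)) x := by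
    have h1 : HasDerivAt (fun x : ℝ => x^2+4) (2*x) x := by
      simpa using ((hasDerivAt_pow 2 x).add_const 4)
    have := (Real.hasDerivAt_sqrt hpos.ne').comp x h1
    refine this.congr_deriv ?_
    field_simp
  have hg : HasDerivAt (fun x : ℝ => (Real.sqrt (x^2+4) - x)/2)
      ((x / Real.sqrt (x^2+4) - 1)/2) x := (hs.sub (hasDerivAt_id x)).div_const 2
  have he : HasDerivAt (fun x : ℝ => Real.exp (-x^2/2)) (-x * Real.exp (-x^2/2)) x := by
    have h1 : HasDerivAt (fun x : ℝ => -x^2/2) (-x) x := by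
      have := ((hasDerivAt_pow 2 x).neg).div_const 2
      refine this.congr_deriv ?_
      norm_num; ring
    simpa [mul_comm] using h1.exp
  exact hg.mul he

lemma Kfun_alg {x : ℝ} (hx : 0 ≤ x) :
    x*(x^2+3) ≤ Real.sqrt (x^2+4) * (1+x^2) := by
  set s := Real.sqrt (x^2+4) with hs
  have hs0 : 0 ≤ s := Real.sqrt_nonneg _
  have hs2 : s^2 = x^2+4 := Real.sq_sqrt (by positivity)
  have h2 : (x*(x^2+3))^2 ≤ (s*(1+x^2))^2 := by nlinarith [sq_nonneg x]
  exact le_of_pow_le_pow_left₀ two_ne_zero (by positivity) h2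

lemma Kfun_tail {z : ℝ} (hz : 0 ≤ z) :
    Kfun z - Kfun (z+2) ≤ ∫ x in z..(z+2), Real.exp (-x^2/2) := by
  set D : ℝ → ℝ := fun x => (x / Real.sqrt (x^2+4) - 1)/2 * Real.exp (-x^2/2)
      + (Real.sqrt (x^2+4) - x)/2 * (-x * Real.exp (-x^2/2)) with hD
  have hcont : Continuous D := by
    have hs : Continuous (fun x : ℝ => Real.sqrt (x^2+4)) := by continuity
    have hsne : ∀ x : ℝ, Real.sqrt (x^2+4) ≠ 0 := fun x =>
      ne_of_gt (Real.sqrt_pos.mpr (by positivity))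
    apply Continuous.add
    · exact (((continuous_id.div hs hsne).sub continuous_const).div_const 2).mul
        (by continuity)
    · exact ((hs.sub continuous_id).div_const 2).mul (by continuity)
  have hftc : ∫ x in z..(z+2), D x = Kfun (z+2) - Kfun z :=
    intervalIntegral.integral_eq_sub_of_hasDerivAt (fun x _ => Kfun_hasDeriv x)
      (hcont.intervalIntegrable _ _)
  have hnn : 0 ≤ ∫ x in z..(z+2), (Real.exp (-x^2/2) + D x) := by
    apply intervalIntegral.integral_nonneg (by linarith)
    intro x hx
    have hx0 : 0 ≤ x := le_trans hz hx.1
    set s := Real.sqrt (x^2+4) with hs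
    have hs0 : 0 < s := Real.sqrt_pos.mpr (by positivity)
    have hs2 : s^2 = x^2+4 := Real.sq_sqrt (by positivity)
    have halg := Kfun_alg hx0
    have he : 0 < Real.exp (-x^2/2) := Real.exp_pos _
    have key : 0 ≤ 1 + (x/s - 1)/2 - x*(s-x)/2 := by
      have heq : 1 + (x/s - 1)/2 - x*(s-x)/2 = (2*s + (x - s) - x*(s-x)*s) / (2*s) := by
        field_simp
      rw [heq]
      apply div_nonneg _ (by linarith)
      nlinarith
    have : 0 ≤ Real.exp (-x^2/2) * (1 + (x/s - 1)/2 - x*(s-x)/2) :=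
      mul_nonneg he.le key
    calc (0:ℝ) ≤ Real.exp (-x^2/2) * (1 + (x/s - 1)/2 - x*(s-x)/2) := this
      _ = Real.exp (-x^2/2) + D x := by simp only [hD]; ring
  have hsplit : ∫ x in z..(z+2), (Real.exp (-x^2/2) + D x)
      = (∫ x in z..(z+2), Real.exp (-x^2/2)) + ∫ x in z..(z+2), D x := by
    apply intervalIntegral.integral_add
    · exact (by continuity : Continuous fun x : ℝ => Real.exp (-x^2/2)).intervalIntegrable _ _
    · exact hcont.intervalIntegrable _ _
  rw [hsplit, hftc] at hnn
  linarith

open MeasureTheory ProbabilityTheory in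
lemma gaussian_tail_lb {z : ℝ} (hz : 0 ≤ z) :
    ENNReal.ofReal ((Kfun z - Kfun (z+2)) / Real.sqrt (2*π)) ≤ gaussianReal 0 1 (Set.Ici z) := by
  rw [gaussianReal_apply_eq_integral 0 one_ne_zero (Set.Ici z)]
  apply ENNReal.ofReal_le_ofReal
  have hpdf : ∀ x : ℝ, gaussianPDFReal 0 1 x = Real.exp (-x^2/2) / Real.sqrt (2*π) := by
    intro x
    simp only [gaussianPDFReal, NNReal.coe_one, mul_one, sub_zero]
    exact inv_mul_eq_div _ _
  have hIcc : (Kfun z - Kfun (z+2)) / Real.sqrt (2*π)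
      ≤ ∫ x in Set.Icc z (z+2), gaussianPDFReal 0 1 x := by
    rw [MeasureTheory.integral_Icc_eq_integral_Ioc,
      ← intervalIntegral.integral_of_le (by linarith : z ≤ z+2)]
    simp_rw [hpdf]
    rw [intervalIntegral.integral_div]
    apply div_le_div_of_nonneg_right (Kfun_tail hz) ?_ |>.trans_eq rfl
    · positivity
  refine hIcc.trans ?_
  apply MeasureTheory.setIntegral_mono_set
  · exact (integrable_gaussianPDFReal 0 1).integrableOn
  · exact Filter.Eventually.of_forall (gaussianPDFReal_nonneg 0 1)
  · exact Filter.Eventually.of_forall (fun x hx => hx.1)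

/-- For `d ≥ 2` independent `N(0, σ²)` Gaussians and
`C = √(2 − 2 ln ln d / ln d)`, the probability that the maximum exceeds
`C·σ·√(ln d)` is at least `1 − exp(−√(ln d)/6.35)`. -/
theorem max_gaussians_threshold_probability {Ω : Type*} [MeasurableSpace Ω]
    (μ : Measure Ω) [IsProbabilityMeasure μ]
    (σ : ℝ) (hσ : 0 < σ) (d : ℕ) (hd : 2 ≤ d)
    (X : Fin d → Ω → ℝ) (hX : ∀ i, Measurable (X i))
    (hlaw : ∀ i, μ.map (X i) = gaussianReal 0 ⟨σ ^ 2, sq_nonneg σ⟩)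
    (hindep : iIndepFun X μ)
    (C : ℝ) (hC : C = Real.sqrt (2 - 2 * Real.log (Real.log d) / Real.log d)) :
    (μ {ω | C * σ * Real.sqrt (Real.log d) ≤ ⨆ i, X i ω}).toReal ≥
      1 - Real.exp (-Real.sqrt (Real.log d) / 6.35) := by
  have hz0 : 0 ≤ C * Real.sqrt (Real.log d) := by rw [hC]; positivity
  set L : ℝ := Real.log d with hLdef
  set z : ℝ := C * Real.sqrt L with hzdef
  set t : ℝ := C * σ * Real.sqrt L with htdef
  set V : NNReal := (⟨σ ^ 2, sq_nonneg σ⟩ : NNReal) with hVdef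
  have hV0 : V ≠ 0 := by
    intro h
    have : (V:ℝ) = 0 := by rw [h]; rfl
    rw [hVdef] at this
    change σ ^ 2 = 0 at this
    nlinarith
  have hzeq : z = Real.sqrt (2 - 2 * Real.log L / L) * Real.sqrt L := by rw [hzdef, hC]
  -- core inequality
  have hcore := core d hd L z rfl hzeq
  have hsqpi : 0 < Real.sqrt (2*π) := Real.sqrt_pos.mpr (by positivity)
  set plb : ℝ := (Kfun z - Kfun (z+2)) / Real.sqrt (2*π) with hplbdef
  have hd0 : (0:ℝ) < d := by positivity
  have hcore' : Real.sqrt L / 6.35 ≤ d * plb := by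
    have h1 : (d:ℝ) * plb = (d * Kfun z - d * Kfun (z+2)) / Real.sqrt (2*π) := by
      rw [hplbdef]; ring
    rw [h1, le_div_iff₀ hsqpi]
    calc Real.sqrt L / 6.35 * Real.sqrt (2*π)
        = Real.sqrt (2*π) * (Real.sqrt L / 6.35) := by ring
      _ ≤ d * Kfun z - d * Kfun (z+2) := hcore
  have hplb0 : 0 ≤ plb := by
    by_contra hneg
    push_neg at hneg
    have h2 : (d:ℝ) * plb < 0 := mul_neg_of_pos_of_neg hd0 hneg
    have h3 : 0 ≤ Real.sqrt L / 6.35 := by positivity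
    linarith
  -- the complement event
  have hbdd : ∀ ω, BddAbove (Set.range fun i => X i ω) := fun ω =>
    (Set.finite_range _).bddAbove
  have hne : Nonempty (Fin d) := ⟨⟨0, by omega⟩⟩
  have hA : {ω | t ≤ ⨆ i, X i ω} = (⋂ i, X i ⁻¹' (Set.Iio t))ᶜ := by
    ext ω
    simp only [Set.mem_setOf_eq, Set.mem_compl_iff, Set.mem_iInter, Set.mem_preimage,
      Set.mem_Iio, not_forall, not_lt]
    constructor
    · intro h
      by_contra hc
      push_neg at hc
      obtain ⟨j, hj⟩ := Finite.exists_max (fun i => X i ω)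
      have hsup : (⨆ i, X i ω) ≤ X j ω := ciSup_le hj
      exact absurd (h.trans hsup) (not_le.mpr (hc j))
    · rintro ⟨i, hi⟩
      exact hi.trans (le_ciSup (hbdd ω) i)
  have hmeasI : MeasurableSet (⋂ i, X i ⁻¹' (Set.Iio t)) :=
    MeasurableSet.iInter (fun i => (hX i) measurableSet_Iio)
  -- measure of intersection
  have hq : ∀ i : Fin d, μ (X i ⁻¹' (Set.Iio t)) = gaussianReal 0 V (Set.Iio t) := by
    intro i
    rw [← Measure.map_apply (hX i) measurableSet_Iio, hlaw i]
  have hinter : μ (⋂ i, X i ⁻¹' (Set.Iio t)) = gaussianReal 0 V (Set.Iio t) ^ d := by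
    rw [hindep.meas_iInter (fun i => ⟨Set.Iio t, measurableSet_Iio, rfl⟩)]
    simp_rw [hq]
    rw [Finset.prod_const, Finset.card_univ, Fintype.card_fin]
  set q : ENNReal := gaussianReal 0 V (Set.Iio t) with hqdef
  set Q1 : ENNReal := gaussianReal 0 V (Set.Ici t) with hQ1def
  have hsum : q + Q1 = 1 := by
    rw [hqdef, hQ1def, ← measure_union (Set.Iio_disjoint_Ici le_rfl) measurableSet_Ici,
      Set.Iio_union_Ici, measure_univ]
  -- scaling to standard gaussian
  have hmap : (gaussianReal 0 1).map (fun x => σ * x) = gaussianReal 0 V := by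
    have h1 := gaussianReal_map_const_mul (μ := 0) (v := 1) σ
    have h2 : (fun x => σ * x) = (σ * ·) := rfl
    rw [h2, h1]
    congr 1
    · ring
    · exact mul_one _
  have hpre : (fun x => σ * x) ⁻¹' (Set.Ici t) = Set.Ici z := by
    ext x
    simp only [Set.mem_preimage, Set.mem_Ici]
    rw [htdef, hzdef]
    constructor
    · intro h; nlinarith
    · intro h; nlinarith
  have hIci : Q1 = gaussianReal 0 1 (Set.Ici z) := by
    rw [hQ1def, ← hmap, Measure.map_apply (by fun_prop) measurableSet_Ici, hpre]
  have htail : ENNReal.ofReal plb ≤ Q1 := by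
    rw [hIci, hplbdef]
    exact gaussian_tail_lb hz0
  -- to real numbers
  have hQ1ne : Q1 ≠ ⊤ := measure_ne_top _ _
  have hqne : q ≠ ⊤ := measure_ne_top _ _
  have hQ1r : plb ≤ Q1.toReal := by
    have := ENNReal.toReal_mono hQ1ne htail
    rwa [ENNReal.toReal_ofReal hplb0] at this
  have hsumr : q.toReal + Q1.toReal = 1 := by
    rw [← ENNReal.toReal_add hqne hQ1ne, hsum]
    rfl
  have hqr1 : q.toReal ≤ 1 - plb := by linarith
  have hqr0 : 0 ≤ q.toReal := ENNReal.toReal_nonneg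
  -- measure of the event
  have hq1 : q ≤ 1 := prob_le_one
  have hμA : μ {ω | t ≤ ⨆ i, X i ω} = 1 - q ^ d := by
    rw [hA, prob_compl_eq_one_sub hmeasI, hinter]
  rw [hμA]
  have hpow1 : q ^ d ≤ 1 := pow_le_one' hq1 d
  rw [ENNReal.toReal_sub_of_le hpow1 ENNReal.one_ne_top, ENNReal.toReal_one,
    ENNReal.toReal_pow]
  have hfinal : q.toReal ^ d ≤ Real.exp (-Real.sqrt L / 6.35) := by
    have h1 : 0 ≤ 1 - plb := le_trans hqr0 hqr1
    have h2 : q.toReal ^ d ≤ (1 - plb) ^ d := pow_le_pow_left₀ hqr0 hqr1 d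
    have h3 : (1 - plb) ^ d ≤ Real.exp (-plb) ^ d := by
      apply pow_le_pow_left₀ h1
      have := Real.add_one_le_exp (-plb)
      linarith
    have h4 : Real.exp (-plb) ^ d = Real.exp (d * (-plb)) := (Real.exp_nat_mul _ d).symm
    have h5 : Real.exp (d * (-plb)) ≤ Real.exp (-Real.sqrt L / 6.35) := by
      apply Real.exp_le_exp.mpr
      have : (d:ℝ) * (-plb) = -(d * plb) := by ring
      rw [this, neg_div]
      linarith
    calc q.toReal ^ d ≤ (1 - plb) ^ d := h2
      _ ≤ Real.exp (-plb) ^ d := h3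
      _ = Real.exp (d * (-plb)) := h4
      _ ≤ Real.exp (-Real.sqrt L / 6.35) := h5
  linarith
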